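/- Let M and K be symmetric n×n real matrices, let A be the 2n×2n block matrix [[0, M],[−K, 0]], and for given n×n matrices M̃ and K̃ define the kick matrix B(c) = [[I, 0],[−c K̃, I]] and the move matrix C(c) = [[I, c M̃],[0, I]]. Then with the τ⁶-corrected matrices M̃ = M − (τ²/6)·M(KM) + (τ⁴/120)·M(KM)² − (τ⁶/5040)·M(KM)³ and K̃ = K + (τ²/12)·(KM)K + (τ⁴/120)·(KM)²K + (17τ⁶/20160)·(KM)³K, as τ → 0, B(τ/2)·C(τ)·B(τ/2) − exp(τA) = O(τ⁸). -/

import Mathlib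

open Asymptotics Filter Matrix

attribute [local instance] Matrix.normedAddCommGroup Matrix.normedSpace

set_option linter.unusedSectionVars false
set_option maxHeartbeats 3200000

namespace KMKaux

variable {d : Type*} [Fintype d] [DecidableEq d]

lemma norm_one_le : ‖(1 : Matrix d d ℝ)‖ ≤ 1 := by
  refine (Matrix.norm_le_iff zero_le_one).2 fun i j => ?_
  rw [Matrix.one_apply]
  split <;> simp

lemma norm_mul_le_card (A B : Matrix d d ℝ) :
    ‖A * B‖ ≤ (Fintype.card d : ℝ) * ‖A‖ * ‖B‖ := by
  refine (Matrix.norm_le_iff (by positivity)).2 fun i j => ?_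
  calc ‖(A * B) i j‖ = ‖∑ k, A i k * B k j‖ := by rw [Matrix.mul_apply]
    _ ≤ ∑ k, ‖A i k * B k j‖ := norm_sum_le _ _
    _ ≤ ∑ _k : d, ‖A‖ * ‖B‖ := by
        refine Finset.sum_le_sum fun k _ => ?_
        rw [norm_mul]
        exact mul_le_mul (Matrix.norm_entry_le_entrywise_sup_norm A)
          (Matrix.norm_entry_le_entrywise_sup_norm B) (norm_nonneg _) (norm_nonneg _)
    _ = (Fintype.card d : ℝ) * ‖A‖ * ‖B‖ := by
        simp [Finset.sum_const, Finset.card_univ, mul_assoc]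

lemma norm_pow_le (A : Matrix d d ℝ) (k : ℕ) :
    ‖A ^ k‖ ≤ (1 + (Fintype.card d : ℝ) * ‖A‖) ^ k := by
  have hcard : (0:ℝ) ≤ (Fintype.card d : ℝ) * ‖A‖ := by positivity
  induction k with
  | zero => simpa using norm_one_le
  | succ k ih =>
      rw [pow_succ, pow_succ]
      calc ‖A ^ k * A‖ ≤ (Fintype.card d : ℝ) * ‖A ^ k‖ * ‖A‖ := norm_mul_le_card _ _
        _ = ‖A ^ k‖ * ((Fintype.card d : ℝ) * ‖A‖) := by ring
        _ ≤ (1 + (Fintype.card d : ℝ) * ‖A‖) ^ k * (1 + (Fintype.card d : ℝ) * ‖A‖) := by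
            refine mul_le_mul ih (by linarith) hcard (by positivity)

lemma exp_tail (A : Matrix d d ℝ) :
    (fun τ : ℝ => NormedSpace.exp (τ • A) -
      ∑ k ∈ Finset.range 8, ((Nat.factorial k : ℝ))⁻¹ • (τ • A) ^ k) =O[nhds 0]
    fun τ : ℝ => τ ^ 8 := by
  set b : ℝ := 1 + (Fintype.card d : ℝ) * ‖A‖ with hbdef
  have hcard : (0:ℝ) ≤ (Fintype.card d : ℝ) * ‖A‖ := by positivity
  have hb1 : (1:ℝ) ≤ b := by simp only [hbdef]; linarith
  have hb0 : (0:ℝ) ≤ b := by linarith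
  have hsummable : Summable (fun k : ℕ => b ^ k / (Nat.factorial k : ℝ)) :=
    Real.summable_pow_div_factorial b
  rw [isBigO_iff]
  refine ⟨b ^ 8 * ∑' k : ℕ, b ^ k / (Nat.factorial k : ℝ), ?_⟩
  have hev : ∀ᶠ τ : ℝ in nhds 0, |τ| ≤ 1 := by
    have h1 : Metric.closedBall (0:ℝ) 1 ∈ nhds 0 := Metric.closedBall_mem_nhds 0 one_pos
    exact Filter.eventually_of_mem h1 fun τ hτ => by
      simpa [Real.dist_eq] using hτ
  filter_upwards [hev] with τ hτ
  set f : ℕ → Matrix d d ℝ := fun k => ((Nat.factorial k : ℝ))⁻¹ • (τ • A) ^ k with hf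
  have hnorm : ∀ k, ‖f k‖ ≤ (|τ| * b) ^ k / (Nat.factorial k : ℝ) := by
    intro k
    have h1 : ‖f k‖ = ((Nat.factorial k : ℝ))⁻¹ * (|τ| ^ k * ‖A ^ k‖) := by
      simp only [hf]
      rw [smul_pow, norm_smul, norm_smul, norm_pow, Real.norm_eq_abs, Real.norm_eq_abs,
        abs_of_nonneg (by positivity : (0:ℝ) ≤ ((Nat.factorial k : ℝ))⁻¹)]
    rw [h1, mul_pow, div_eq_inv_mul]
    have hfk : (0:ℝ) ≤ ((Nat.factorial k : ℝ))⁻¹ := by positivity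
    refine mul_le_mul_of_nonneg_left ?_ hfk
    exact mul_le_mul_of_nonneg_left (norm_pow_le A k) (by positivity)
  have hns : Summable fun k => ‖f k‖ :=
    Summable.of_nonneg_of_le (fun k => norm_nonneg _) hnorm
      (Real.summable_pow_div_factorial (|τ| * b))
  have hsum : Summable f := hns.of_norm
  have key : NormedSpace.exp (τ • A) - ∑ k ∈ Finset.range 8, f k = ∑' k, f (k + 8) := by
    have h2 := Summable.sum_add_tsum_nat_add (f := f) 8 hsum
    rw [NormedSpace.exp_eq_tsum ℝ]
    show (∑' k : ℕ, f k) - ∑ k ∈ Finset.range 8, f k = ∑' k, f (k + 8)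
    rw [← h2]
    abel
  rw [key]
  have hshift : Summable fun k => ‖f (k + 8)‖ := (summable_nat_add_iff 8).mpr hns
  have hbound : ∀ k, ‖f (k + 8)‖ ≤ |τ| ^ 8 * (b ^ 8 * (b ^ k / (Nat.factorial k : ℝ))) := by
    intro k
    refine (hnorm (k + 8)).trans ?_
    have hfle : (Nat.factorial k : ℝ) ≤ (Nat.factorial (k + 8) : ℝ) := by
      exact_mod_cast Nat.factorial_le (by omega)
    have hfpos : (0:ℝ) < (Nat.factorial k : ℝ) := by positivity
    have hnum : (|τ| * b) ^ (k + 8) ≤ |τ| ^ 8 * b ^ (k + 8) := by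
      rw [mul_pow]
      refine mul_le_mul_of_nonneg_right ?_ (by positivity)
      exact pow_le_pow_of_le_one (abs_nonneg τ) hτ (by omega)
    calc (|τ| * b) ^ (k + 8) / (Nat.factorial (k + 8) : ℝ)
        ≤ (|τ| ^ 8 * b ^ (k + 8)) / (Nat.factorial k : ℝ) := by
          apply div_le_div₀ (by positivity) hnum hfpos hfle
      _ = |τ| ^ 8 * (b ^ 8 * (b ^ k / (Nat.factorial k : ℝ))) := by
          rw [pow_add, div_eq_mul_inv, div_eq_mul_inv]
          ring
  have hrs : Summable fun k => |τ| ^ 8 * (b ^ 8 * (b ^ k / (Nat.factorial k : ℝ))) :=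
    (hsummable.mul_left _).mul_left _
  calc ‖∑' k, f (k + 8)‖ ≤ ∑' k, ‖f (k + 8)‖ := norm_tsum_le_tsum_norm hshift
    _ ≤ ∑' k, |τ| ^ 8 * (b ^ 8 * (b ^ k / (Nat.factorial k : ℝ))) :=
        Summable.tsum_le_tsum hbound hshift hrs
    _ = |τ| ^ 8 * (b ^ 8 * ∑' k, b ^ k / (Nat.factorial k : ℝ)) := by
        rw [tsum_mul_left, tsum_mul_left]
    _ ≤ b ^ 8 * (∑' k : ℕ, b ^ k / (Nat.factorial k : ℝ)) * ‖τ ^ 8‖ := by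
        rw [Real.norm_eq_abs, abs_pow]
        exact le_of_eq (by ring)


variable {l m o p : Type*} [Fintype l] [Fintype m] [Fintype o] [Fintype p]

lemma norm_fromBlocks_le (A : Matrix l m ℝ) (B : Matrix l p ℝ) (C : Matrix o m ℝ)
    (D : Matrix o p ℝ) : ‖fromBlocks A B C D‖ ≤ ‖A‖ + ‖B‖ + ‖C‖ + ‖D‖ := by
  have nA := norm_nonneg A; have nB := norm_nonneg B
  have nC := norm_nonneg C; have nD := norm_nonneg D
  refine (Matrix.norm_le_iff (by linarith)).2 fun i j => ?_
  cases i <;> cases j <;>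
    simp only [Matrix.fromBlocks_apply₁₁, Matrix.fromBlocks_apply₁₂,
      Matrix.fromBlocks_apply₂₁, Matrix.fromBlocks_apply₂₂]
  · exact (Matrix.norm_entry_le_entrywise_sup_norm A).trans (by linarith)
  · exact (Matrix.norm_entry_le_entrywise_sup_norm B).trans (by linarith)
  · exact (Matrix.norm_entry_le_entrywise_sup_norm C).trans (by linarith)
  · exact (Matrix.norm_entry_le_entrywise_sup_norm D).trans (by linarith)

lemma isBigO_fromBlocks {g : ℝ → ℝ} {f1 : ℝ → Matrix l m ℝ} {f2 : ℝ → Matrix l p ℝ}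
    {f3 : ℝ → Matrix o m ℝ} {f4 : ℝ → Matrix o p ℝ}
    (h1 : f1 =O[nhds 0] g) (h2 : f2 =O[nhds 0] g) (h3 : f3 =O[nhds 0] g)
    (h4 : f4 =O[nhds 0] g) :
    (fun τ => fromBlocks (f1 τ) (f2 τ) (f3 τ) (f4 τ)) =O[nhds 0] g := by
  have h := ((h1.norm_left.add h2.norm_left).add h3.norm_left).add h4.norm_left
  refine IsBigO.trans ?_ h
  refine Asymptotics.IsBigO.of_bound 1 (Filter.Eventually.of_forall fun τ => ?_)
  have hb := norm_fromBlocks_le (f1 τ) (f2 τ) (f3 τ) (f4 τ)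
  have hn : ‖‖f1 τ‖ + ‖f2 τ‖ + ‖f3 τ‖ + ‖f4 τ‖‖ = ‖f1 τ‖ + ‖f2 τ‖ + ‖f3 τ‖ + ‖f4 τ‖ :=
    Real.norm_of_nonneg (by positivity)
  rw [one_mul, hn]
  exact hb

lemma term_isBigO (k : ℕ) (hk : 8 ≤ k) (c : ℝ) (W : Matrix l m ℝ) :
    (fun τ : ℝ => (c * τ ^ k) • W) =O[nhds 0] fun τ : ℝ => τ ^ 8 := by
  rw [isBigO_iff]
  refine ⟨|c| * ‖W‖, ?_⟩
  have hev : ∀ᶠ τ : ℝ in nhds 0, |τ| ≤ 1 := by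
    have h1 : Metric.closedBall (0:ℝ) 1 ∈ nhds 0 := Metric.closedBall_mem_nhds 0 one_pos
    exact Filter.eventually_of_mem h1 fun τ hτ => by simpa [Real.dist_eq] using hτ
  filter_upwards [hev] with τ hτ
  rw [norm_smul, Real.norm_eq_abs, abs_mul, abs_pow, Real.norm_eq_abs, abs_pow]
  calc |c| * |τ| ^ k * ‖W‖ ≤ |c| * |τ| ^ 8 * ‖W‖ := by
        refine mul_le_mul_of_nonneg_right (mul_le_mul_of_nonneg_left ?_ (abs_nonneg c))
          (norm_nonneg W)
        exact pow_le_pow_of_le_one (abs_nonneg τ) hτ hk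
    _ = |c| * ‖W‖ * |τ| ^ 8 := by ring

end KMKaux

section Blocks

variable {n : ℕ}

private lemma kmk (Kt Mt : Matrix (Fin n) (Fin n) ℝ) (τ : ℝ) :
    Matrix.fromBlocks 1 0 (-((τ / 2) • Kt)) 1 * Matrix.fromBlocks 1 (τ • Mt) 0 1 *
      Matrix.fromBlocks 1 0 (-((τ / 2) • Kt)) 1
    = Matrix.fromBlocks (1 + ((-1/2 : ℝ) * τ ^ 2) • (Mt * Kt)) (τ • Mt)
        (((-1 : ℝ) * τ ^ 1) • Kt + ((1/4 : ℝ) * τ ^ 3) • (Kt * (Mt * Kt)))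
        (1 + ((-1/2 : ℝ) * τ ^ 2) • (Kt * Mt)) := by
  rw [Matrix.fromBlocks_multiply, Matrix.fromBlocks_multiply, Matrix.fromBlocks_inj]
  refine ⟨?_, ?_, ?_, ?_⟩
  all_goals simp only [mul_add, add_mul, mul_sub, sub_mul, smul_mul_assoc, mul_smul_comm, smul_smul,
      mul_assoc, smul_add, smul_sub, neg_mul, mul_neg, smul_neg, neg_smul, mul_one, one_mul,
      zero_mul, mul_zero, add_zero, zero_add, neg_neg, sub_eq_add_neg, neg_add]
  all_goals module

private lemma powS (M K : Matrix (Fin n) (Fin n) ℝ) (τ : ℝ) :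
    ∑ k ∈ Finset.range 8,
        ((Nat.factorial k : ℝ))⁻¹ • (τ • Matrix.fromBlocks 0 M (-K) 0) ^ k
    = Matrix.fromBlocks ((1 : Matrix (Fin n) (Fin n) ℝ) + ((-1/2 : ℝ) * τ ^ 2) • (M * K) + ((1/24 : ℝ) * τ ^ 4) • (M * (K * (M * K))) + ((-1/720 : ℝ) * τ ^ 6) • (M * (K * (M * (K * (M * K)))))) (((1 : ℝ) * τ ^ 1) • (M : Matrix (Fin n) (Fin n) ℝ) + ((-1/6 : ℝ) * τ ^ 3) • (M * (K * M)) + ((1/120 : ℝ) * τ ^ 5) • (M * (K * (M * (K * M)))) + ((-1/5040 : ℝ) * τ ^ 7) • (M * (K * (M * (K * (M * (K * M))))))) (((-1 : ℝ) * τ ^ 1) • (K : Matrix (Fin n) (Fin n) ℝ) + ((1/6 : ℝ) * τ ^ 3) • (K * (M * K)) + ((-1/120 : ℝ) * τ ^ 5) • (K * (M * (K * (M * K)))) + ((1/5040 : ℝ) * τ ^ 7) • (K * (M * (K * (M * (K * (M * K))))))) ((1 : Matrix (Fin n) (Fin n) ℝ) + ((-1/2 : ℝ) * τ ^ 2) •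 (K * M) + ((1/24 : ℝ) * τ ^ 4) • (K * (M * (K * M))) + ((-1/720 : ℝ) * τ ^ 6) • (K * (M * (K * (M * (K * M)))))) := by
  set A : Matrix (Fin n ⊕ Fin n) (Fin n ⊕ Fin n) ℝ := Matrix.fromBlocks 0 M (-K) 0 with hA
  have e1 : A ^ 1 = Matrix.fromBlocks 0 M (-K) 0 := by rw [pow_one, hA]
  have e2 : A ^ 2 = Matrix.fromBlocks (-(M * K)) 0 0 (-(K * M)) := by
    rw [pow_two, hA]; simp [Matrix.fromBlocks_multiply]
  have e3 : A ^ 3 = Matrix.fromBlocks 0 (-(M * (K * M))) (K * (M * K)) 0 := by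
    rw [pow_succ, e2, hA]; simp [Matrix.fromBlocks_multiply, mul_assoc]
  have e4 : A ^ 4 = Matrix.fromBlocks (M * (K * (M * K))) 0 0 (K * (M * (K * M))) := by
    rw [pow_succ, e3, hA]; simp [Matrix.fromBlocks_multiply, mul_assoc]
  have e5 : A ^ 5 = Matrix.fromBlocks 0 (M * (K * (M * (K * M))))
      (-(K * (M * (K * (M * K))))) 0 := by
    rw [pow_succ, e4, hA]; simp [Matrix.fromBlocks_multiply, mul_assoc]
  have e6 : A ^ 6 = Matrix.fromBlocks (-(M * (K * (M * (K * (M * K)))))) 0 0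
      (-(K * (M * (K * (M * (K * M)))))) := by
    rw [pow_succ, e5, hA]; simp [Matrix.fromBlocks_multiply, mul_assoc]
  have e7 : A ^ 7 = Matrix.fromBlocks 0 (-(M * (K * (M * (K * (M * (K * M)))))))
      (K * (M * (K * (M * (K * (M * K)))))) 0 := by
    rw [pow_succ, e6, hA]; simp [Matrix.fromBlocks_multiply, mul_assoc]
  have e0 : A ^ 0 = Matrix.fromBlocks 1 0 0 1 := by rw [pow_zero, Matrix.fromBlocks_one]
  simp only [Finset.sum_range_succ, Finset.sum_range_zero, zero_add, smul_pow,
    e0, e1, e2, e3, e4, e5, e6, e7, Matrix.fromBlocks_smul, Matrix.fromBlocks_add]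
  rw [Matrix.fromBlocks_inj]
  refine ⟨?_, ?_, ?_, ?_⟩
  all_goals norm_num [Nat.factorial]
  all_goals simp only [mul_add, add_mul, mul_sub, sub_mul, smul_mul_assoc, mul_smul_comm,
    smul_smul, mul_assoc, smul_add, smul_sub, neg_mul, mul_neg, smul_neg, neg_smul, mul_one,
    one_mul, zero_mul, mul_zero, add_zero, zero_add, neg_neg, sub_eq_add_neg, neg_add]
  all_goals module

private lemma block11 (M K : Matrix (Fin n) (Fin n) ℝ) (τ : ℝ) :
    (1 + ((-1/2 : ℝ) * τ ^ 2) • ((M - (τ ^ 2 / 6) • (M * (K * M)) + (τ ^ 4 / 120) • (M * ((K * M) * (K * M))) - (τ ^ 6 / 5040) • (M * ((K * M) * (K * M) * (K * M)))) * (K + (τ ^ 2 / 12) • ((K * M) * K) + (τ ^ 4 / 120) • ((K * M) * (K * M) * K) + (17 * τ ^ 6 / 20160) • ((K * M) * (K * M) * (K * M) * K)))) + -((1 : Matrix (Fin n) (Fin n) ℝ) + ((-1/2 : ℝ) * τ ^ 2) • (M * K) + ((1/24 : ℝ) * τ ^ 4) • (M * (K * (M * K))) + ((-1/720 : ℝ)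 * τ ^ 6) • (M * (K * (M * (K * (M * K)))))) = ((1/40320 : ℝ) * τ ^ 8) • (M * (K * (M * (K * (M * (K * (M * K))))))) + ((53/1209600 : ℝ) * τ ^ 10) • (M * (K * (M * (K * (M * (K * (M * (K * (M * K))))))))) + ((-13/4838400 : ℝ) * τ ^ 12) • (M * (K * (M * (K * (M * (K * (M * (K * (M * (K * (M * K))))))))))) + ((17/203212800 : ℝ) * τ ^ 14) • (M * (K * (M * (K * (M * (K * (M * (K * (M * (K * (M * (K * (M * K))))))))))))) := by
  simp only [mul_add, add_mul, mul_sub, sub_mul, smul_mul_assoc, mul_smul_comm, smul_smul,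
      mul_assoc, smul_add, smul_sub, neg_mul, mul_neg, smul_neg, neg_smul, mul_one, one_mul,
      zero_mul, mul_zero, add_zero, zero_add, neg_neg, sub_eq_add_neg, neg_add]
  module

private lemma block12 (M K : Matrix (Fin n) (Fin n) ℝ) (τ : ℝ) :
    (τ • (M - (τ ^ 2 / 6) • (M * (K * M)) + (τ ^ 4 / 120) • (M * ((K * M) * (K * M))) - (τ ^ 6 / 5040) • (M * ((K * M) * (K * M) * (K * M))))) + -(((1 : ℝ) * τ ^ 1) • (M : Matrix (Fin n) (Fin n) ℝ) + ((-1/6 : ℝ) * τ ^ 3) • (M * (K * M)) + ((1/120 : ℝ) * τ ^ 5) • (M * (K * (M * (K * M)))) + ((-1/5040 : ℝ) * τ ^ 7) • (M * (K * (M * (K * (M * (K * M))))))) = 0 := by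
  simp only [mul_add, add_mul, mul_sub, sub_mul, smul_mul_assoc, mul_smul_comm, smul_smul,
      mul_assoc, smul_add, smul_sub, neg_mul, mul_neg, smul_neg, neg_smul, mul_one, one_mul,
      zero_mul, mul_zero, add_zero, zero_add, neg_neg, sub_eq_add_neg, neg_add]
  module

private lemma block21 (M K : Matrix (Fin n) (Fin n) ℝ) (τ : ℝ) :
    (((-1 : ℝ) * τ ^ 1) • (K + (τ ^ 2 / 12) • ((K * M) * K) + (τ ^ 4 / 120) • ((K * M) * (K * M) * K) + (17 * τ ^ 6 / 20160) • ((K * M) * (K * M) * (K * M) * K)) + ((1/4 : ℝ) * τ ^ 3) • ((K + (τ ^ 2 / 12) • ((K * M) * K) + (τ ^ 4 / 120) • ((K * M) * (K * M) * K) + (17 * τ ^ 6 / 20160) • ((K * M) * (K * M) * (K * M) * K)) * ((M - (τ ^ 2 / 6) • (M * (K * M)) + (τ ^ 4 / 120) • (M * ((K * M) * (K * M))) - (τ ^ 6 / 5040) • (M * ((K * M) * (K * M) * (K * M)))) * (K + (τ ^ 2 / 12) • ((K * M) * K) + (τ ^ 4 / 120) • ((K * M) * (K * M) * K) + (17 *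 τ ^ 6 / 20160) • ((K * M) * (K * M) * (K * M) * K))))) + -(((-1 : ℝ) * τ ^ 1) • (K : Matrix (Fin n) (Fin n) ℝ) + ((1/6 : ℝ) * τ ^ 3) • (K * (M * K)) + ((-1/120 : ℝ) * τ ^ 5) • (K * (M * (K * (M * K)))) + ((1/5040 : ℝ) * τ ^ 7) • (K * (M * (K * (M * (K * (M * K)))))))
    = ((1/12096 : ℝ) * τ ^ 9) • (K * (M * (K * (M * (K * (M * (K * (M * K)))))))) + ((-1/28800 : ℝ) * τ ^ 11) • (K * (M * (K * (M * (K * (M * (K * (M * (K * (M * K)))))))))) + ((-37/301056000 : ℝ) * τ ^ 15) • (K * (M * (K * (M * (K * (M * (K * (M * (K * (M * (K * (M * (K * (M * K)))))))))))))) + ((-1/92897280 : ℝ) * τ ^ 17) • (K * (M * (K * (M * (K * (M * (K * (M * (K * (M * (K * (M * (K * (M * (K * (M * K)))))))))))))))) + ((17/21676032000 : ℝ) * τ ^ 19) • (K * (M * (K * (M * (K * (M * (K * (M * (K * (M * (K * (M * (K * (M * (K * (M * (K * (M * K)))))))))))))))))) + ((-289/8193540096000 : ℝ) * τ ^ 21)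 • (K * (M * (K * (M * (K * (M * (K * (M * (K * (M * (K * (M * (K * (M * (K * (M * (K * (M * (K * (M * K)))))))))))))))))))) := by
  simp only [mul_add, add_mul, mul_sub, sub_mul, smul_mul_assoc, mul_smul_comm, smul_smul,
      mul_assoc, smul_add, smul_sub, neg_mul, mul_neg, smul_neg, neg_smul, mul_one, one_mul,
      zero_mul, mul_zero, add_zero, zero_add, neg_neg, sub_eq_add_neg, neg_add]
  module

private lemma block22 (M K : Matrix (Fin n) (Fin n) ℝ) (τ : ℝ) :
    (1 + ((-1/2 : ℝ) * τ ^ 2) • ((K + (τ ^ 2 / 12) • ((K * M) * K) + (τ ^ 4 / 120) • ((K * M) * (K * M) * K) + (17 * τ ^ 6 / 20160) • ((K * M) * (K * M) * (K * M) * K)) * (M - (τ ^ 2 / 6) • (M * (K * M)) + (τ ^ 4 / 120) • (M * ((K * M) * (K * M))) - (τ ^ 6 / 5040) • (M * ((K * M) * (K * M) * (K * M)))))) + -((1 : Matrix (Fin n) (Fin n) ℝ) + ((-1/2 : ℝ) * τ ^ 2) • (K * M) + ((1/24 : ℝ) * τ ^ 4) • (K * (M * (K * M))) + ((-1/720 :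 ℝ) * τ ^ 6) • (K * (M * (K * (M * (K * M)))))) = ((1/40320 : ℝ) * τ ^ 8) • (K * (M * (K * (M * (K * (M * (K * M))))))) + ((53/1209600 : ℝ) * τ ^ 10) • (K * (M * (K * (M * (K * (M * (K * (M * (K * M))))))))) + ((-13/4838400 : ℝ) * τ ^ 12) • (K * (M * (K * (M * (K * (M * (K * (M * (K * (M * (K * M))))))))))) + ((17/203212800 : ℝ) * τ ^ 14) • (K * (M * (K * (M * (K * (M * (K * (M * (K * (M * (K * (M * (K * M))))))))))))) := by
  simp only [mul_add, add_mul, mul_sub, sub_mul, smul_mul_assoc, mul_smul_comm, smul_smul,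
      mul_assoc, smul_add, smul_sub, neg_mul, mul_neg, smul_neg, neg_smul, mul_one, one_mul,
      zero_mul, mul_zero, add_zero, zero_add, neg_neg, sub_eq_add_neg, neg_add]
  module

end Blocks

theorem kick_move_kick_quadratic_hamiltonian_order8
    (n : ℕ) (M K : Matrix (Fin n) (Fin n) ℝ) (hM : M.IsSymm) (hK : K.IsSymm) :
    (fun τ : ℝ =>
        Matrix.fromBlocks 1 0
              (-((τ / 2) • (K + (τ ^ 2 / 12) • ((K * M) * K)
                  + (τ ^ 4 / 120) • ((K * M) * (K * M) * K)
                  + (17 * τ ^ 6 / 20160) • ((K * M) * (K * M) * (K * M) * K)))) 1 *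
            Matrix.fromBlocks 1
              (τ • (M - (τ ^ 2 / 6) • (M * (K * M))
                  + (τ ^ 4 / 120) • (M * ((K * M) * (K * M)))
                  - (τ ^ 6 / 5040) • (M * ((K * M) * (K * M) * (K * M))))) 0 1 *
            Matrix.fromBlocks 1 0
              (-((τ / 2) • (K + (τ ^ 2 / 12) • ((K * M) * K)
                  + (τ ^ 4 / 120) • ((K * M) * (K * M) * K)
                  + (17 * τ ^ 6 / 20160) • ((K * M) * (K * M) * (K * M) * K)))) 1 -
          NormedSpace.exp (τ • Matrix.fromBlocks 0 M (-K) 0))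
      =O[nhds (0 : ℝ)] fun τ : ℝ => τ ^ 8 := by
  have hexp := KMKaux.exp_tail (Matrix.fromBlocks 0 M (-K) 0 :
    Matrix (Fin n ⊕ Fin n) (Fin n ⊕ Fin n) ℝ)
  have hPS : (fun τ : ℝ =>
      Matrix.fromBlocks 1 0 (-((τ / 2) • (K + (τ ^ 2 / 12) • ((K * M) * K) + (τ ^ 4 / 120) • ((K * M) * (K * M) * K) + (17 * τ ^ 6 / 20160) • ((K * M) * (K * M) * (K * M) * K)))) 1 * Matrix.fromBlocks 1 (τ • (M - (τ ^ 2 / 6) • (M * (K * M)) + (τ ^ 4 / 120) • (M * ((K * M) * (K * M))) - (τ ^ 6 / 5040) • (M * ((K * M) * (K * M) * (K * M))))) 0 1 *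
        Matrix.fromBlocks 1 0 (-((τ / 2) • (K + (τ ^ 2 / 12) • ((K * M) * K) + (τ ^ 4 / 120) • ((K * M) * (K * M) * K) + (17 * τ ^ 6 / 20160) • ((K * M) * (K * M) * (K * M) * K)))) 1 -
      ∑ k ∈ Finset.range 8,
        ((Nat.factorial k : ℝ))⁻¹ • (τ • Matrix.fromBlocks 0 M (-K) 0) ^ k)
      = fun τ : ℝ => Matrix.fromBlocks (((1/40320 : ℝ) * τ ^ 8) • (M * (K * (M * (K * (M * (K * (M * K))))))) + ((53/1209600 : ℝ) * τ ^ 10) • (M * (K * (M * (K * (M * (K * (M * (K * (M * K))))))))) + ((-13/4838400 : ℝ) * τ ^ 12) • (M * (K * (M * (K * (M * (K * (M * (K * (M * (K * (M * K))))))))))) + ((17/203212800 : ℝ) * τ ^ 14) • (M * (K * (M * (K * (M * (K * (M * (K * (M * (K * (M * (K * (M * K)))))))))))))) 0 (((1/12096 : ℝ) * τ ^ 9) • (K * (M * (K * (M * (K * (M * (K * (M * K)))))))) + ((-1/28800 : ℝ) * τ ^ 11) • (K * (M * (K * (M * (K * (M * (K * (M * (K * (M * K)))))))))) + ((-37/301056000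 : ℝ) * τ ^ 15) • (K * (M * (K * (M * (K * (M * (K * (M * (K * (M * (K * (M * (K * (M * K)))))))))))))) + ((-1/92897280 : ℝ) * τ ^ 17) • (K * (M * (K * (M * (K * (M * (K * (M * (K * (M * (K * (M * (K * (M * (K * (M * K)))))))))))))))) + ((17/21676032000 : ℝ) * τ ^ 19) • (K * (M * (K * (M * (K * (M * (K * (M * (K * (M * (K * (M * (K * (M * (K * (M * (K * (M * K)))))))))))))))))) + ((-289/8193540096000 : ℝ) * τ ^ 21) • (K * (M * (K * (M * (K * (M * (K * (M * (K * (M * (K * (M * (K * (M * (K * (M * (K * (M * (K * (M * K))))))))))))))))))))) (((1/40320 : ℝ) * τ ^ 8) • (K * (M * (K * (M * (K * (M * (K * M))))))) + ((53/1209600 : ℝ) * τ ^ 10) • (K * (M * (K * (M * (K * (M * (K * (M * (K * M))))))))) + ((-13/4838400 : ℝ) * τ ^ 12) • (K * (M * (K * (M * (K * (M * (K * (M * (K * (M * (K * M))))))))))) + ((17/203212800 : ℝ) * τ ^ 14) • (K * (M * (K * (M * (K * (M * (K * (M * (K * (M * (K * (M * (K * M)))))))))))))) := by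
    funext τ
    rw [kmk, powS, sub_eq_add_neg, Matrix.fromBlocks_neg, Matrix.fromBlocks_add,
      Matrix.fromBlocks_inj]
    exact ⟨block11 M K τ, by rw [block12 M K τ], block21 M K τ, block22 M K τ⟩
  have h1 : (fun τ : ℝ =>
      Matrix.fromBlocks 1 0 (-((τ / 2) • (K + (τ ^ 2 / 12) • ((K * M) * K) + (τ ^ 4 / 120) • ((K * M) * (K * M) * K) + (17 * τ ^ 6 / 20160) • ((K * M) * (K * M) * (K * M) * K)))) 1 * Matrix.fromBlocks 1 (τ • (M - (τ ^ 2 / 6) • (M * (K * M)) + (τ ^ 4 / 120) • (M * ((K * M) * (K * M))) - (τ ^ 6 / 5040) • (M * ((K * M) * (K * M) * (K * M))))) 0 1 *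
        Matrix.fromBlocks 1 0 (-((τ / 2) • (K + (τ ^ 2 / 12) • ((K * M) * K) + (τ ^ 4 / 120) • ((K * M) * (K * M) * K) + (17 * τ ^ 6 / 20160) • ((K * M) * (K * M) * (K * M) * K)))) 1 -
      ∑ k ∈ Finset.range 8,
        ((Nat.factorial k : ℝ))⁻¹ • (τ • Matrix.fromBlocks 0 M (-K) 0) ^ k)
      =O[nhds (0:ℝ)] fun τ : ℝ => τ ^ 8 := by
    rw [hPS]
    refine KMKaux.isBigO_fromBlocks ?_ ?_ ?_ ?_
    · exact ((((KMKaux.term_isBigO 8 (by norm_num) _ _).add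
        (KMKaux.term_isBigO 10 (by norm_num) _ _)).add
        (KMKaux.term_isBigO 12 (by norm_num) _ _)).add
        (KMKaux.term_isBigO 14 (by norm_num) _ _))
    · exact isBigO_zero _ _
    · exact (((((KMKaux.term_isBigO 9 (by norm_num) _ _).add
        (KMKaux.term_isBigO 11 (by norm_num) _ _)).add
        (KMKaux.term_isBigO 15 (by norm_num) _ _)).add
        (KMKaux.term_isBigO 17 (by norm_num) _ _)).add
        (KMKaux.term_isBigO 19 (by norm_num) _ _)).add
        (KMKaux.term_isBigO 21 (by norm_num) _ _)
    · exact ((((KMKaux.term_isBigO 8 (by norm_num) _ _).add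
        (KMKaux.term_isBigO 10 (by norm_num) _ _)).add
        (KMKaux.term_isBigO 12 (by norm_num) _ _)).add
        (KMKaux.term_isBigO 14 (by norm_num) _ _))
  have hsplit : (fun τ : ℝ =>
      Matrix.fromBlocks 1 0 (-((τ / 2) • (K + (τ ^ 2 / 12) • ((K * M) * K) + (τ ^ 4 / 120) • ((K * M) * (K * M) * K) + (17 * τ ^ 6 / 20160) • ((K * M) * (K * M) * (K * M) * K)))) 1 * Matrix.fromBlocks 1 (τ • (M - (τ ^ 2 / 6) • (M * (K * M)) + (τ ^ 4 / 120) • (M * ((K * M) * (K * M))) - (τ ^ 6 / 5040) • (M * ((K * M) * (K * M) * (K * M))))) 0 1 *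
        Matrix.fromBlocks 1 0 (-((τ / 2) • (K + (τ ^ 2 / 12) • ((K * M) * K) + (τ ^ 4 / 120) • ((K * M) * (K * M) * K) + (17 * τ ^ 6 / 20160) • ((K * M) * (K * M) * (K * M) * K)))) 1 -
      NormedSpace.exp (τ • Matrix.fromBlocks 0 M (-K) 0))
      = fun τ : ℝ =>
      (Matrix.fromBlocks 1 0 (-((τ / 2) • (K + (τ ^ 2 / 12) • ((K * M) * K) + (τ ^ 4 / 120) • ((K * M) * (K * M) * K) + (17 * τ ^ 6 / 20160) • ((K * M) * (K * M) * (K * M) * K)))) 1 * Matrix.fromBlocks 1 (τ • (M - (τ ^ 2 / 6) • (M * (K * M)) + (τ ^ 4 / 120) • (M * ((K * M) * (K * M))) - (τ ^ 6 / 5040) • (M * ((K * M) * (K * M) * (K * M))))) 0 1 *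
        Matrix.fromBlocks 1 0 (-((τ / 2) • (K + (τ ^ 2 / 12) • ((K * M) * K) + (τ ^ 4 / 120) • ((K * M) * (K * M) * K) + (17 * τ ^ 6 / 20160) • ((K * M) * (K * M) * (K * M) * K)))) 1 -
      ∑ k ∈ Finset.range 8,
        ((Nat.factorial k : ℝ))⁻¹ • (τ • Matrix.fromBlocks 0 M (-K) 0) ^ k) -
      (NormedSpace.exp (τ • Matrix.fromBlocks 0 M (-K) 0) -
      ∑ k ∈ Finset.range 8,
        ((Nat.factorial k : ℝ))⁻¹ • (τ • Matrix.fromBlocks 0 M (-K) 0) ^ k) := by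
    funext τ
    abel
  rw [hsplit]
  exact h1.sub hexp
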